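/- Let T : V → g be an O-operator on a Lie algebra g with respect to a representation (V;ρ). Then the linear map N_T on the semidirect product Lie algebra g ⋉_ρ V given by N_T(x, u) = (Tu, 0) is a Nijenhuis operator, i.e. [N_T a, N_T b] = N_T([N_T a, b] + [a, N_T b] − N_T[a,b]) for all a,b ∈ g ⊕ V. -/

import Mathlib

attribute [local instance 100] LieRing.ofAssociativeRing

/-- The semidirect product bracket on `g × V`. -/
def sdBracket {K : Type*} [Field K] {g : Type*} [LieRing g] [LieAlgebra K g]
    {V : Type*} [AddCommGroup V] [Module K V]
    (ρ : g →ₗ⁅K⁆ Module.End K V) (p q : g × V) : g × V :=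
  (⁅p.1, q.1⁆, ρ p.1 q.2 - ρ q.1 p.2)

/-- The operator `N_T(x,u) = (Tu, 0)` on `g × V`. -/
def NT {K : Type*} [Field K] {g : Type*} [LieRing g] [LieAlgebra K g]
    {V : Type*} [AddCommGroup V] [Module K V]
    (T : V →ₗ[K] g) (p : g × V) : g × V :=
  (T p.2, 0)

/-- If `T` is an O-operator, then `N_T` is a Nijenhuis operator on the
semidirect product Lie algebra `g ⋉_ρ V`. -/
theorem stmt11 {K : Type*} [Field K]
    {g : Type*} [LieRing g] [LieAlgebra K g]
    {V : Type*} [AddCommGroup V] [Module K V]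
    (ρ : g →ₗ⁅K⁆ Module.End K V) (T : V →ₗ[K] g)
    (hT : ∀ u v : V, ⁅T u, T v⁆ = T (ρ (T u) v - ρ (T v) u)) :
    ∀ a b : g × V,
      sdBracket ρ (NT T a) (NT T b)
        = NT T (sdBracket ρ (NT T a) b + sdBracket ρ a (NT T b)
            - NT T (sdBracket ρ a b)) := by
  intro a b
  simp [sdBracket, NT, hT, Prod.ext_iff, sub_eq_add_neg]
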